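/- If a quadratic form E on an algebra A of bounded real-valued functions satisfies that normal contractions operate on it, then for all f, g in A one has E(fg)^{1/2} ≤ ‖f‖_sup · E(g)^{1/2} + ‖g‖_sup · E(f)^{1/2}. -/

import Mathlib

open scoped ENNReal BigOperators

noncomputable def trunc (c s : ℝ) : ℝ := max (-c) (min c s)

lemma trunc_zero {c : ℝ} (hc : 0 ≤ c) : trunc c 0 = 0 := by
  unfold trunc
  rw [min_eq_right hc, max_eq_right (by linarith)]

lemma abs_trunc_le {c : ℝ} (hc : 0 ≤ c) (s : ℝ) : |trunc c s| ≤ c := by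
  rw [abs_le]
  exact ⟨le_max_left _ _, max_le (by linarith) (min_le_left _ _)⟩

lemma trunc_lip (c s t : ℝ) : |trunc c s - trunc c t| ≤ |s - t| := by
  unfold trunc
  calc |max (-c) (min c s) - max (-c) (min c t)|
      ≤ max |(-c) - (-c)| |min c s - min c t| := abs_max_sub_max_le_max _ _ _ _
    _ = |min c s - min c t| := by simp
    _ ≤ max |c - c| |s - t| := abs_min_sub_min_le_max _ _ _ _
    _ = |s - t| := by simp

lemma trunc_eq_self {c s : ℝ} (h : |s| ≤ c) : trunc c s = s := by
  rw [abs_le] at h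
  unfold trunc
  rw [min_eq_right h.2, max_eq_right h.1]

lemma ofReal_sq_rpow_half {c : ℝ} (hc : 0 ≤ c) :
    (ENNReal.ofReal (c ^ 2)) ^ (1/2 : ℝ) = ENNReal.ofReal c := by
  rcases eq_or_lt_of_le hc with h | h
  · rw [← h]
    norm_num
  · rw [ENNReal.ofReal_rpow_of_pos (by positivity)]
    congr 1
    rw [← Real.rpow_natCast c 2, ← Real.rpow_mul hc]
    norm_num

/-- A normal contraction in `k` variables. -/
def IsNormalContraction {k : ℕ} (F : (Fin k → ℝ) → ℝ) : Prop :=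
  F 0 = 0 ∧ ∀ x y : Fin k → ℝ, |F x - F y| ≤ ∑ i, |x i - y i|

/-- Normal contractions operate on a quadratic form `E` on `A`. -/
def NormalContractionsOperate {X : Type*} (A : Set (X → ℝ)) (E : (X → ℝ) → ℝ≥0∞) : Prop :=
  ∀ (k : ℕ) (F : (Fin k → ℝ) → ℝ), IsNormalContraction F →
    ∀ f : Fin k → X → ℝ, (∀ i, f i ∈ A) →
      E (fun x => F (fun i => f i x)) ^ (1/2 : ℝ) ≤ ∑ i, E (f i) ^ (1/2 : ℝ)

theorem stmt0 {X : Type*} [Nonempty X] (A : Set (X → ℝ)) (E : (X → ℝ) → ℝ≥0∞)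
    (hAadd : ∀ f ∈ A, ∀ g ∈ A, f + g ∈ A)
    (hAmul : ∀ f ∈ A, ∀ g ∈ A, f * g ∈ A)
    (hAsmul : ∀ (c : ℝ), ∀ f ∈ A, c • f ∈ A)
    (hbdd : ∀ f ∈ A, ∃ C : ℝ, ∀ x, |f x| ≤ C)
    (hscale : ∀ (c : ℝ) (f : X → ℝ), f ∈ A → E (c • f) = ENNReal.ofReal (c ^ 2) * E f)
    (hpar : ∀ f g : X → ℝ, f ∈ A → g ∈ A → E f < ∞ → E g < ∞ →
      E (f + g) + E (f - g) = 2 * E f + 2 * E g)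
    (hop : NormalContractionsOperate A E) :
    ∀ f ∈ A, ∀ g ∈ A,
      E (f * g) ^ (1/2 : ℝ) ≤
        (⨆ x, ENNReal.ofReal |f x|) * E g ^ (1/2 : ℝ) +
        (⨆ x, ENNReal.ofReal |g x|) * E f ^ (1/2 : ℝ) := by
  intro f hf g hg
  obtain ⟨Cf, hCf⟩ := hbdd f hf
  obtain ⟨Cg, hCg⟩ := hbdd g hg
  set a : ℝ := ⨆ x, |f x| with ha
  set b : ℝ := ⨆ x, |g x| with hb
  have hbaf : BddAbove (Set.range fun x => |f x|) := ⟨Cf, by rintro _ ⟨x, rfl⟩; exact hCf x⟩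
  have hbag : BddAbove (Set.range fun x => |g x|) := ⟨Cg, by rintro _ ⟨x, rfl⟩; exact hCg x⟩
  have hfa : ∀ x, |f x| ≤ a := fun x => le_ciSup hbaf x
  have hgb : ∀ x, |g x| ≤ b := fun x => le_ciSup hbag x
  have ha0 : 0 ≤ a := (abs_nonneg _).trans (hfa (Classical.arbitrary X))
  have hb0 : 0 ≤ b := (abs_nonneg _).trans (hgb (Classical.arbitrary X))
  have hsupf : (⨆ x, ENNReal.ofReal |f x|) = ENNReal.ofReal a := by
    rw [ha]
    exact (Monotone.map_ciSup_of_continuousAt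
      (ENNReal.continuous_ofReal.continuousAt) (fun _ _ h => ENNReal.ofReal_le_ofReal h) hbaf).symm
  have hsupg : (⨆ x, ENNReal.ofReal |g x|) = ENNReal.ofReal b := by
    rw [hb]
    exact (Monotone.map_ciSup_of_continuousAt
      (ENNReal.continuous_ofReal.continuousAt) (fun _ _ h => ENNReal.ofReal_le_ofReal h) hbag).symm
  -- degenerate cases
  rcases eq_or_lt_of_le ha0 with ha' | hapos
  · have hf0 : ∀ x, f x = 0 := fun x => abs_eq_zero.mp
      (le_antisymm (ha' ▸ hfa x) (abs_nonneg _))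
    have h0 : f * g = (0 : ℝ) • (f * g) := by
      funext x; simp [hf0 x]
    have hE0 : E (f * g) = 0 := by
      rw [h0, hscale 0 _ (hAmul f hf g hg)]; simp
    rw [hE0, ENNReal.zero_rpow_of_pos (by norm_num)]
    exact zero_le
  rcases eq_or_lt_of_le hb0 with hb' | hbpos
  · have hg0 : ∀ x, g x = 0 := fun x => abs_eq_zero.mp
      (le_antisymm (hb' ▸ hgb x) (abs_nonneg _))
    have h0 : f * g = (0 : ℝ) • (f * g) := by
      funext x; simp [hg0 x]
    have hE0 : E (f * g) = 0 := by
      rw [h0, hscale 0 _ (hAmul f hf g hg)]; simp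
    rw [hE0, ENNReal.zero_rpow_of_pos (by norm_num)]
    exact zero_le
  -- main case
  set F : (Fin 2 → ℝ) → ℝ := fun x => trunc a (x 0 / b) * trunc b (x 1 / a) with hFdef
  have hF : IsNormalContraction F := by
    constructor
    · show trunc a ((0 : Fin 2 → ℝ) 0 / b) * trunc b ((0 : Fin 2 → ℝ) 1 / a) = 0
      simp [trunc_zero ha0, trunc_zero hb0]
    · intro x y
      rw [Fin.sum_univ_two]
      have h1 : |F x - F y| ≤ |trunc a (x 0 / b)| * |trunc b (x 1 / a) - trunc b (y 1 / a)|
          + |trunc a (x 0 / b) - trunc a (y 0 / b)| * |trunc b (y 1 / a)| := by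
        have : F x - F y = trunc a (x 0 / b) * (trunc b (x 1 / a) - trunc b (y 1 / a))
            + (trunc a (x 0 / b) - trunc a (y 0 / b)) * trunc b (y 1 / a) := by
          simp only [hFdef]; ring
        rw [this]
        exact (abs_add_le _ _).trans (by rw [abs_mul, abs_mul])
      have h2 : |trunc b (x 1 / a) - trunc b (y 1 / a)| ≤ |x 1 - y 1| / a := by
        have := trunc_lip b (x 1 / a) (y 1 / a)
        rwa [div_sub_div_same, abs_div, abs_of_pos hapos] at this
      have h3 : |trunc a (x 0 / b) - trunc a (y 0 / b)| ≤ |x 0 - y 0| / b := by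
        have := trunc_lip a (x 0 / b) (y 0 / b)
        rwa [div_sub_div_same, abs_div, abs_of_pos hbpos] at this
      have h4 : |trunc a (x 0 / b)| ≤ a := abs_trunc_le ha0 _
      have h5 : |trunc b (y 1 / a)| ≤ b := abs_trunc_le hb0 _
      calc |F x - F y| ≤ |trunc a (x 0 / b)| * |trunc b (x 1 / a) - trunc b (y 1 / a)|
            + |trunc a (x 0 / b) - trunc a (y 0 / b)| * |trunc b (y 1 / a)| := h1
        _ ≤ a * (|x 1 - y 1| / a) + (|x 0 - y 0| / b) * b := by
            gcongr
        _ = |x 0 - y 0| + |x 1 - y 1| := by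
            field_simp
            ring
  have hmem : ∀ i : Fin 2, (![b • f, a • g] : Fin 2 → X → ℝ) i ∈ A := by
    intro i
    fin_cases i
    · exact hAsmul b f hf
    · exact hAsmul a g hg
  have hkey := hop 2 F hF ![b • f, a • g] hmem
  have heq : (fun x => F (fun i => (![b • f, a • g] : Fin 2 → X → ℝ) i x)) = f * g := by
    funext x
    show trunc a (((![b • f, a • g] : Fin 2 → X → ℝ) 0) x / b)
        * trunc b (((![b • f, a • g] : Fin 2 → X → ℝ) 1) x / a) = f x * g x
    simp only [Matrix.cons_val_zero, Matrix.cons_val_one, Matrix.head_cons, Pi.smul_apply,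
      smul_eq_mul]
    rw [mul_div_cancel_left₀ _ (ne_of_gt hbpos), mul_div_cancel_left₀ _ (ne_of_gt hapos),
      trunc_eq_self (hfa x), trunc_eq_self (hgb x)]
  rw [heq, Fin.sum_univ_two] at hkey
  simp only [Matrix.cons_val_zero, Matrix.cons_val_one, Matrix.head_cons] at hkey
  have hEbf : E (b • f) ^ (1/2 : ℝ) = ENNReal.ofReal b * E f ^ (1/2 : ℝ) := by
    rw [hscale b f hf, ENNReal.mul_rpow_of_nonneg _ _ (by norm_num), ofReal_sq_rpow_half hb0]
  have hEag : E (a • g) ^ (1/2 : ℝ) = ENNReal.ofReal a * E g ^ (1/2 : ℝ) := by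
    rw [hscale a g hg, ENNReal.mul_rpow_of_nonneg _ _ (by norm_num), ofReal_sq_rpow_half ha0]
  rw [hEbf, hEag] at hkey
  rw [hsupf, hsupg]
  calc E (f * g) ^ (1/2 : ℝ)
      ≤ ENNReal.ofReal b * E f ^ (1/2 : ℝ) + ENNReal.ofReal a * E g ^ (1/2 : ℝ) := hkey
    _ = ENNReal.ofReal a * E g ^ (1/2 : ℝ) + ENNReal.ofReal b * E f ^ (1/2 : ℝ) := add_comm _ _
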